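/- Let φ be a growing substitution with biinfinite fixed point x (φ(x) = x), and suppose x is nonperiodic and the desubstitution sequence of a nonperiodic point z ∈ X_φ is eventually periodic with period m, i.e., R_φ^{k+m}(z) = R_φ^k(z) for some k ≥ 0. Then z is a quasi-fixed point of φ of period m. -/

import Mathlib

def substWord {A : Type*} (φ : A → List A) (w : List A) : List A := w.flatMap φ

def blockStart {A : Type*} (φ : A → List A) (x : ℤ → A) (j : ℤ) : ℤ :=
  if 0 ≤ j then ∑ t ∈ Finset.range j.toNat, ((φ (x (t : ℤ))).length : ℤ)
  else - ∑ t ∈ Finset.range (-j).toNat, ((φ (x (-(t : ℤ) - 1))).length : ℤ)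

open Classical in
noncomputable def substZgen {A : Type*} [Inhabited A] (φ : A → List A) (x : ℤ → A) :
    ℤ → A :=
  fun n =>
    if h : ∃ j : ℤ, blockStart φ x j ≤ n ∧ n < blockStart φ x (j + 1) then
      (φ (x h.choose)).getD (n - blockStart φ x h.choose).toNat default
    else default

def shiftZ {A : Type*} (c : ℤ) (x : ℤ → A) : ℤ → A := fun n => x (n + c)

section Aux
variable {A : Type*} [Inhabited A] (φ : A → List A)

lemma blockStart_zero (y : ℤ → A) : blockStart φ y 0 = 0 := by
  simp [blockStart]

lemma blockStart_succ (y : ℤ → A) (j : ℤ) :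
    blockStart φ y (j + 1) = blockStart φ y j + ((φ (y j)).length : ℤ) := by
  rcases le_or_gt 0 j with hj | hj
  · rw [blockStart, blockStart, if_pos (by omega : (0:ℤ) ≤ j + 1), if_pos hj]
    have h1 : (j + 1).toNat = j.toNat + 1 := by omega
    rw [h1, Finset.sum_range_succ]
    have h2 : ((j.toNat : ℤ)) = j := Int.toNat_of_nonneg hj
    rw [h2]
  · rcases eq_or_lt_of_le (by omega : j + 1 ≤ 0) with h0 | h0
    · have hj1 : j = -1 := by omega
      subst hj1
      simp [blockStart]
    · rw [blockStart, blockStart, if_neg (by omega), if_neg (by omega)]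
      have h1 : (-j).toNat = (-(j+1)).toNat + 1 := by omega
      rw [h1, Finset.sum_range_succ]
      have h2 : -(((-(j+1)).toNat : ℤ)) - 1 = j := by omega
      rw [h2]
      ring

lemma blockStart_strictMono (hne : ∀ a, φ a ≠ []) (y : ℤ → A) :
    StrictMono (blockStart φ y) := by
  apply strictMono_int_of_lt_succ
  intro j
  rw [blockStart_succ]
  have : 0 < (φ (y j)).length := List.length_pos_iff.mpr (hne _)
  omega

lemma blockStart_exists (hne : ∀ a, φ a ≠ []) (y : ℤ → A) (n : ℤ) :
    ∃ j : ℤ, blockStart φ y j ≤ n ∧ n < blockStart φ y (j + 1) := by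
  have hsm := blockStart_strictMono φ hne y
  have hkey : ∀ j : ℤ, (0 ≤ j → j ≤ blockStart φ y j) ∧ (j ≤ 0 → blockStart φ y j ≤ j) := by
    intro j
    induction j using Int.induction_on with
    | zero => simp [blockStart_zero]
    | succ k ih =>
      have := hsm (lt_add_one (k : ℤ))
      constructor
      · intro _; have := ih.1 (by omega); omega
      · intro h; omega
    | pred k ih =>
      have := hsm (by omega : -(k:ℤ) - 1 < -(k:ℤ))
      constructor
      · intro h; omega
      · intro _; have := ih.2 (by omega); omega
  have hge : ∀ j : ℤ, 0 ≤ j → j ≤ blockStart φ y j := fun j h => (hkey j).1 h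
  have hle : ∀ j : ℤ, j ≤ 0 → blockStart φ y j ≤ j := fun j h => (hkey j).2 h
  have hbdd : ∃ b : ℤ, ∀ z : ℤ, blockStart φ y z ≤ n → z ≤ b := by
    refine ⟨max n 0, fun z hz => ?_⟩
    rcases le_or_gt z 0 with h | h
    · omega
    · have := hge z (by omega); omega
  have hinh : ∃ z : ℤ, blockStart φ y z ≤ n := by
    refine ⟨min n 0, ?_⟩
    rcases le_total n 0 with h | h
    · have := hle (min n 0) (by omega)
      omega
    · have : min n 0 = 0 := by omega
      rw [this, blockStart_zero]; omega
  obtain ⟨j, hjle, hjub⟩ := Int.exists_greatest_of_bdd hbdd hinh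
  refine ⟨j, hjle, ?_⟩
  by_contra h
  have := hjub (j + 1) (by omega)
  omega

lemma blockStart_unique (hne : ∀ a, φ a ≠ []) (y : ℤ → A) (n : ℤ) {j j' : ℤ}
    (h1 : blockStart φ y j ≤ n) (h2 : n < blockStart φ y (j + 1))
    (h1' : blockStart φ y j' ≤ n) (h2' : n < blockStart φ y (j' + 1)) : j = j' := by
  have hsm := blockStart_strictMono φ hne y
  by_contra h
  rcases lt_or_gt_of_ne h with hlt | hlt
  · have := (hsm.monotone (by omega : j + 1 ≤ j')); omega
  · have := (hsm.monotone (by omega : j' + 1 ≤ j)); omega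

lemma substZgen_eq (hne : ∀ a, φ a ≠ []) (y : ℤ → A) {j n : ℤ}
    (h1 : blockStart φ y j ≤ n) (h2 : n < blockStart φ y (j + 1)) :
    substZgen φ y n = (φ (y j)).getD (n - blockStart φ y j).toNat default := by
  have hex : ∃ j : ℤ, blockStart φ y j ≤ n ∧ n < blockStart φ y (j + 1) := ⟨j, h1, h2⟩
  rw [substZgen, dif_pos hex]
  have : hex.choose = j :=
    blockStart_unique φ hne y n hex.choose_spec.1 hex.choose_spec.2 h1 h2
  rw [this]

lemma blockStart_add (y : ℤ → A) (a b : ℤ) :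
    blockStart φ y (a + b) = blockStart φ y a + blockStart φ (shiftZ a y) b := by
  induction b using Int.induction_on with
  | zero => simp [blockStart_zero]
  | succ k ih =>
    have h1 : a + ((k : ℤ) + 1) = (a + k) + 1 := by ring
    rw [h1, blockStart_succ, ih, blockStart_succ]
    simp [shiftZ, add_comm]
    ring
  | pred k ih =>
    have h1 : a + (-(k : ℤ) - 1) + 1 = a + (-k) := by ring
    have := blockStart_succ φ y (a + (-(k:ℤ) - 1))
    rw [h1, ih] at this
    have h2 := blockStart_succ φ (shiftZ a y) (-(k:ℤ) - 1)
    have h3 : (-(k:ℤ) - 1) + 1 = -k := by ring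
    rw [h3] at h2
    have h4 : shiftZ a y (-(k:ℤ) - 1) = y (a + (-(k:ℤ) - 1)) := by
      simp [shiftZ]; ring_nf
    rw [h4] at h2
    omega

lemma substZgen_shiftZ (hne : ∀ a, φ a ≠ []) (y : ℤ → A) (a : ℤ) :
    substZgen φ (shiftZ a y) = shiftZ (blockStart φ y a) (substZgen φ y) := by
  funext n
  obtain ⟨j, h1, h2⟩ := blockStart_exists φ hne (shiftZ a y) n
  rw [substZgen_eq φ hne _ h1 h2]
  have key : ∀ b : ℤ, blockStart φ (shiftZ a y) b = blockStart φ y (a + b) - blockStart φ y a := by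
    intro b; rw [blockStart_add]; ring
  have h1' : blockStart φ y (a + j) ≤ n + blockStart φ y a := by
    rw [key] at h1; omega
  have h2' : n + blockStart φ y a < blockStart φ y ((a + j) + 1) := by
    have := h2; rw [key] at this
    have he : a + j + 1 = a + (j + 1) := by ring
    rw [he]; omega
  show _ = substZgen φ y (n + blockStart φ y a)
  rw [substZgen_eq φ hne _ h1' h2']
  have hyj : shiftZ a y j = y (a + j) := by simp [shiftZ, add_comm]
  rw [hyj, key j]
  congr 2
  omega

lemma shiftZ_shiftZ (a b : ℤ) (y : ℤ → A) : shiftZ a (shiftZ b y) = shiftZ (a + b) y := by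
  funext n; simp [shiftZ]; ring_nf

lemma shiftZ_zero (y : ℤ → A) : shiftZ 0 y = y := by funext n; simp [shiftZ]

lemma iterate_shiftZ (hne : ∀ a, φ a ≠ []) (k : ℕ) (y : ℤ → A) (a : ℤ) :
    ∃ e : ℤ, (substZgen φ)^[k] (shiftZ a y) = shiftZ e ((substZgen φ)^[k] y) := by
  induction k generalizing y a with
  | zero => exact ⟨a, rfl⟩
  | succ k ih =>
    rw [Function.iterate_succ_apply, Function.iterate_succ_apply,
      substZgen_shiftZ φ hne y a]
    exact ih _ _

end Aux

theorem quasiFixed_aux {A : Type*} [Inhabited A]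
    (φ : A → List A) (hne : ∀ a, φ a ≠ [])
    (z : ℤ → A)
    (zs : ℕ → ℤ → A) (c : ℕ → ℕ) (h0 : zs 0 = z)
    (hrec : ∀ i, zs i = shiftZ (c i : ℤ) (substZgen φ (zs (i + 1))) ∧
      c i < (φ (zs (i + 1) 0)).length)
    (m K : ℕ) (hper : zs (K + m) = zs K) :
    ∃ c' : ℤ, shiftZ c' ((substZgen φ)^[m] z) = z := by
  -- telescoping
  have tel : ∀ (k i : ℕ), ∃ d : ℤ, zs i = shiftZ d ((substZgen φ)^[k] (zs (i + k))) := by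
    intro k
    induction k with
    | zero => intro i; exact ⟨0, by simp [shiftZ_zero]⟩
    | succ k ih =>
      intro i
      obtain ⟨d, hd⟩ := ih i
      have h1 : zs (i + k) = shiftZ ((c (i + k) : ℤ)) (substZgen φ (zs (i + k + 1))) :=
        (hrec (i + k)).1
      obtain ⟨e, he⟩ := iterate_shiftZ φ hne k (substZgen φ (zs (i + k + 1))) (c (i + k))
      refine ⟨d + e, ?_⟩
      have hik : i + (k + 1) = (i + k) + 1 := by omega
      calc zs i = shiftZ d ((substZgen φ)^[k] (zs (i + k))) := hd
        _ = shiftZ d ((substZgen φ)^[k]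
              (shiftZ ((c (i + k) : ℤ)) (substZgen φ (zs (i + k + 1))))) := by rw [← h1]
        _ = shiftZ d (shiftZ e ((substZgen φ)^[k] (substZgen φ (zs (i + k + 1))))) := by
              rw [he]
        _ = shiftZ (d + e) ((substZgen φ)^[k + 1] (zs (i + (k + 1)))) := by
              rw [shiftZ_shiftZ, hik, Function.iterate_succ_apply]
  obtain ⟨d1, hd1⟩ := tel K 0
  rw [h0] at hd1
  simp only [Nat.zero_add] at hd1
  obtain ⟨d2, hd2⟩ := tel m K
  rw [hper] at hd2
  -- φ^[m] zs K = shiftZ (-d2) (zs K)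
  have hm2 : (substZgen φ)^[m] (zs K) = shiftZ (-d2) (zs K) := by
    nth_rewrite 2 [hd2]
    rw [shiftZ_shiftZ, neg_add_cancel, shiftZ_zero]
  obtain ⟨e1, he1⟩ := iterate_shiftZ φ hne m ((substZgen φ)^[K] (zs K)) d1
  obtain ⟨e2, he2⟩ := iterate_shiftZ φ hne K (zs K) (-d2)
  have hK1 : (substZgen φ)^[K] (zs K) = shiftZ (-d1) z := by
    rw [hd1, shiftZ_shiftZ, neg_add_cancel, shiftZ_zero]
  have key : (substZgen φ)^[m] z = shiftZ (e1 + (e2 + -d1)) z := by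
    calc (substZgen φ)^[m] z
        = (substZgen φ)^[m] (shiftZ d1 ((substZgen φ)^[K] (zs K))) := by rw [← hd1]
      _ = shiftZ e1 ((substZgen φ)^[m] ((substZgen φ)^[K] (zs K))) := he1
      _ = shiftZ e1 ((substZgen φ)^[K] ((substZgen φ)^[m] (zs K))) := by
          rw [← Function.iterate_add_apply, ← Function.iterate_add_apply, Nat.add_comm]
      _ = shiftZ e1 ((substZgen φ)^[K] (shiftZ (-d2) (zs K))) := by rw [hm2]
      _ = shiftZ e1 (shiftZ e2 ((substZgen φ)^[K] (zs K))) := by rw [he2]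
      _ = shiftZ e1 (shiftZ e2 (shiftZ (-d1) z)) := by rw [hK1]
      _ = shiftZ (e1 + (e2 + -d1)) z := by rw [shiftZ_shiftZ, shiftZ_shiftZ, add_assoc]
  refine ⟨-(e1 + (e2 + -d1)), ?_⟩
  rw [key, shiftZ_shiftZ, neg_add_cancel, shiftZ_zero]


/-- A biinfinite sequence `x` belongs to the subshift `X_φ` generated by the substitution
`φ`: every factor of `x` appears in `φ^n(a)` for some letter `a` and some `n`. -/
def memXphi {A : Type*} (φ : A → List A) (x : ℤ → A) : Prop :=
  ∀ (i : ℤ) (L : ℕ), ∃ (a : A) (n : ℕ),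
    (List.ofFn (fun j : Fin L => x (i + j))) <:+: (substWord φ)^[n] [a]

/-- A biinfinite sequence is (shift-)periodic. -/
def periodicZ {A : Type*} (x : ℤ → A) : Prop :=
  ∃ p : ℕ, 0 < p ∧ ∀ n : ℤ, x (n + p) = x n

theorem eventually_periodic_desubstitution_quasiFixed {A : Type*} [Inhabited A]
    (φ : A → List A) (hne : ∀ a, φ a ≠ [])
    (hgrow : ∀ a : A, Filter.Tendsto (fun n => ((substWord φ)^[n] [a]).length)
      Filter.atTop Filter.atTop)
    (x : ℤ → A) (hx : substZgen φ x = x) (hxnp : ¬ periodicZ x)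
    (z : ℤ → A) (hzX : memXphi φ z) (hznp : ¬ periodicZ z)
    (zs : ℕ → ℤ → A) (c : ℕ → ℕ) (h0 : zs 0 = z)
    (hzsX : ∀ i, memXphi φ (zs i)) (hzsnp : ∀ i, ¬ periodicZ (zs i))
    (hrec : ∀ i, zs i = shiftZ (c i : ℤ) (substZgen φ (zs (i + 1))) ∧
      c i < (φ (zs (i + 1) 0)).length)
    (m K : ℕ) (hm : 1 ≤ m) (hper : zs (K + m) = zs K) :
    ∃ c' : ℤ, shiftZ c' ((substZgen φ)^[m] z) = z :=
  quasiFixed_aux φ hne z zs c h0 hrec m K hper
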